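/- Under the regression discontinuity setup with exogenous noise and ratio-form estimand $\tau_\gamma = \frac{\mathbb{E}[\gamma_+(Z) Y \mathbf{1}\{Z \geq c\}]}{\mathbb{E}[\gamma_+(Z)\mathbf{1}\{Z \geq c\}]} - \frac{\mathbb{E}[\gamma_-(Z) Y \mathbf{1}\{Z < c\}]}{\mathbb{E}[\gamma_-(Z)\mathbf{1}\{Z < c\}]}$, suppose $\tau(u) = \tau$ is constant, $|\alpha_{(0)}(u) - \mu_{\gamma,-}| \leq M$ for all $u$ (where $\mu_{\gamma,-}$ is the second ratio above), and $\mathbb{E}[h_+(U)] > 0$. Then $|\tau_\gamma - \tau| \leq \frac{M\, \mathbb{E}[|h_+(U) - h_-(U)|]}{\mathbb{E}[h_+(U)]}$. -/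

import Mathlib

open MeasureTheory

/-- Bias bound for the ratio-form (self-normalized) weighted estimator under a
constant treatment effect: `|τ_γ - τ| ≤ M E[|h₊(U) - h₋(U)|] / E[h₊(U)]`. -/
theorem stmt14
    {Ω : Type*} [MeasurableSpace Ω] (P : Measure Ω) [IsProbabilityMeasure P]
    (U Z Y0 Y1 : Ω → ℝ)
    (hUm : Measurable U) (hZm : Measurable Z)
    (hY0m : Measurable Y0) (hY1m : Measurable Y1)
    (CY : ℝ) (hY0b : ∀ ω, |Y0 ω| ≤ CY) (hY1b : ∀ ω, |Y1 ω| ≤ CY)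
    (G : Measure ℝ) [IsProbabilityMeasure G]
    (lam : Measure ℝ) [SigmaFinite lam]
    (p : ℝ → ℝ → ℝ) (hpm : Measurable (Function.uncurry p)) (hpnn : ∀ z u, 0 ≤ p z u)
    (α0 α1 τ : ℝ → ℝ) (hα0m : Measurable α0) (hα1m : Measurable α1)
    (hτdef : ∀ u, τ u = α1 u - α0 u)
    (hJoint0 : ∀ g φf : ℝ → ℝ, Measurable g → Measurable φf →
      (∃ Cg, ∀ z, |g z| ≤ Cg) → (∃ Cf, ∀ u, |φf u| ≤ Cf) →
      ∫ ω, Y0 ω * g (Z ω) * φf (U ω) ∂P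
        = ∫ u, α0 u * (∫ z, g z * p z u ∂lam) * φf u ∂G)
    (hJoint1 : ∀ g φf : ℝ → ℝ, Measurable g → Measurable φf →
      (∃ Cg, ∀ z, |g z| ≤ Cg) → (∃ Cf, ∀ u, |φf u| ≤ Cf) →
      ∫ ω, Y1 ω * g (Z ω) * φf (U ω) ∂P
        = ∫ u, α1 u * (∫ z, g z * p z u ∂lam) * φf u ∂G)
    (hDens : ∀ g : ℝ → ℝ, Measurable g → (∃ Cg, ∀ z, |g z| ≤ Cg) →
      ∫ ω, g (Z ω) ∂P = ∫ u, (∫ z, g z * p z u ∂lam) ∂G)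
    (c : ℝ) (γp γm : ℝ → ℝ) (hγpm : Measurable γp) (hγmm : Measurable γm)
    (hγpnn : ∀ z, 0 ≤ γp z) (hγmnn : ∀ z, 0 ≤ γm z)
    (Cγ : ℝ) (hγpb : ∀ z, |γp z| ≤ Cγ) (hγmb : ∀ z, |γm z| ≤ Cγ)
    (hplus hminus : ℝ → ℝ)
    (hhp : ∀ u, hplus u = ∫ z in Set.Ici c, γp z * p z u ∂lam)
    (hhm : ∀ u, hminus u = ∫ z in Set.Iio c, γm z * p z u ∂lam)
    (hhppos : 0 < ∫ u, hplus u ∂G) (hhmpos : 0 < ∫ u, hminus u ∂G)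
    -- the ratio-form estimand:
    (μγm τγ : ℝ)
    (hμγm : μγm = (∫ ω, (if Z ω < c then γm (Z ω) * (if c ≤ Z ω then Y1 ω else Y0 ω) else 0) ∂P)
        / (∫ ω, (if Z ω < c then γm (Z ω) else 0) ∂P))
    (hτγ : τγ = (∫ ω, (if c ≤ Z ω then γp (Z ω) * (if c ≤ Z ω then Y1 ω else Y0 ω) else 0) ∂P)
        / (∫ ω, (if c ≤ Z ω then γp (Z ω) else 0) ∂P) - μγm)
    -- constant treatment effect and uniform bound:
    (τ0 : ℝ) (hτconst : ∀ u, τ u = τ0)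
    (M : ℝ) (hMa : ∀ u, |α0 u - μγm| ≤ M) :
    |τγ - τ0| ≤ M * (∫ u, |hplus u - hminus u| ∂G) / (∫ u, hplus u ∂G) := by
  classical
  set gp : ℝ → ℝ := fun z => if c ≤ z then γp z else 0 with hgp
  set gm : ℝ → ℝ := fun z => if z < c then γm z else 0 with hgm
  have hCγ0 : 0 ≤ Cγ := le_trans (abs_nonneg _) (hγpb 0)
  have hgpm : Measurable gp := Measurable.ite measurableSet_Ici hγpm measurable_const
  have hgmm : Measurable gm := Measurable.ite measurableSet_Iio hγmm measurable_const
  have hgpb : ∀ z, |gp z| ≤ Cγ := by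
    intro z; simp only [hgp]; split_ifs with h
    · exact hγpb z
    · simpa using hCγ0
  have hgmb : ∀ z, |gm z| ≤ Cγ := by
    intro z; simp only [hgm]; split_ifs with h
    · exact hγmb z
    · simpa using hCγ0
  -- inner integrals
  have hip : ∀ u, ∫ z, gp z * p z u ∂lam = hplus u := by
    intro u
    rw [hhp, ← integral_indicator measurableSet_Ici]
    congr 1; funext z
    simp only [hgp, Set.indicator, Set.mem_Ici]
    split_ifs with h <;> simp
  have him : ∀ u, ∫ z, gm z * p z u ∂lam = hminus u := by
    intro u
    rw [hhm, ← integral_indicator measurableSet_Iio]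
    congr 1; funext z
    simp only [hgm, Set.indicator, Set.mem_Iio]
    split_ifs with h <;> simp
  have hone : Measurable (fun _ : ℝ => (1:ℝ)) := measurable_const
  have honeb : ∃ Cf : ℝ, ∀ u : ℝ, |(fun _ : ℝ => (1:ℝ)) u| ≤ Cf := ⟨1, by simp⟩
  -- numerator +
  have hAp : (∫ ω, (if c ≤ Z ω then γp (Z ω) * (if c ≤ Z ω then Y1 ω else Y0 ω) else 0) ∂P)
      = ∫ u, α1 u * hplus u ∂G := by
    have h := hJoint1 gp (fun _ => 1) hgpm hone ⟨Cγ, hgpb⟩ honeb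
    have hL : (∫ ω, Y1 ω * gp (Z ω) * (fun _ : ℝ => (1:ℝ)) (U ω) ∂P)
        = ∫ ω, (if c ≤ Z ω then γp (Z ω) * (if c ≤ Z ω then Y1 ω else Y0 ω) else 0) ∂P := by
      congr 1; funext ω
      simp only [hgp]
      split_ifs with h1 <;> ring
    have hR : (∫ u, α1 u * (∫ z, gp z * p z u ∂lam) * (fun _ : ℝ => (1:ℝ)) u ∂G)
        = ∫ u, α1 u * hplus u ∂G := by
      congr 1; funext u; rw [hip u]; ring
    rw [← hL, h, hR]
  -- numerator -
  have hAm : (∫ ω, (if Z ω < c then γm (Z ω) * (if c ≤ Z ω then Y1 ω else Y0 ω) else 0) ∂P)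
      = ∫ u, α0 u * hminus u ∂G := by
    have h := hJoint0 gm (fun _ => 1) hgmm hone ⟨Cγ, hgmb⟩ honeb
    have hL : (∫ ω, Y0 ω * gm (Z ω) * (fun _ : ℝ => (1:ℝ)) (U ω) ∂P)
        = ∫ ω, (if Z ω < c then γm (Z ω) * (if c ≤ Z ω then Y1 ω else Y0 ω) else 0) ∂P := by
      congr 1; funext ω
      simp only [hgm]
      split_ifs with h1 h2
      · exact absurd h2 (not_le.mpr h1)
      · ring
      · ring
    have hR : (∫ u, α0 u * (∫ z, gm z * p z u ∂lam) * (fun _ : ℝ => (1:ℝ)) u ∂G)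
        = ∫ u, α0 u * hminus u ∂G := by
      congr 1; funext u; rw [him u]; ring
    rw [← hL, h, hR]
  -- denominators
  have hBp : (∫ ω, (if c ≤ Z ω then γp (Z ω) else 0) ∂P) = ∫ u, hplus u ∂G := by
    have h := hDens gp hgpm ⟨Cγ, hgpb⟩
    have hL : (∫ ω, gp (Z ω) ∂P) = ∫ ω, (if c ≤ Z ω then γp (Z ω) else 0) ∂P := rfl
    rw [← hL, h]
    exact integral_congr_ae (Filter.Eventually.of_forall fun u => hip u)
  have hBm : (∫ ω, (if Z ω < c then γm (Z ω) else 0) ∂P) = ∫ u, hminus u ∂G := by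
    have h := hDens gm hgmm ⟨Cγ, hgmb⟩
    have hL : (∫ ω, gm (Z ω) ∂P) = ∫ ω, (if Z ω < c then γm (Z ω) else 0) ∂P := rfl
    rw [← hL, h]
    exact integral_congr_ae (Filter.Eventually.of_forall fun u => him u)
  set Ip : ℝ := ∫ u, hplus u ∂G with hIp
  set Im : ℝ := ∫ u, hminus u ∂G with hIm
  have hIp0 : Ip ≠ 0 := ne_of_gt hhppos
  have hIm0 : Im ≠ 0 := ne_of_gt hhmpos
  -- integrability
  have hplus_int : Integrable hplus G := by
    by_contra h
    rw [hIp, integral_undef h] at hhppos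
    exact lt_irrefl 0 hhppos
  have hminus_int : Integrable hminus G := by
    by_contra h
    rw [hIm, integral_undef h] at hhmpos
    exact lt_irrefl 0 hhmpos
  have hfm : AEStronglyMeasurable (fun u => α0 u - μγm) G :=
    (hα0m.sub measurable_const).aestronglyMeasurable
  have hfb : ∀ u, ‖α0 u - μγm‖ ≤ M := fun u => by rw [Real.norm_eq_abs]; exact hMa u
  have hM0 : 0 ≤ M := le_trans (abs_nonneg _) (hMa 0)
  have int1 : Integrable (fun u => (α0 u - μγm) * hplus u) G :=
    hplus_int.bdd_mul hfm (c := M) (Filter.Eventually.of_forall hfb)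
  have int2 : Integrable (fun u => (α0 u - μγm) * hminus u) G :=
    hminus_int.bdd_mul hfm (c := M) (Filter.Eventually.of_forall hfb)
  have intd : Integrable (fun u => (α0 u - μγm) * (hplus u - hminus u)) G :=
    (hplus_int.sub hminus_int).bdd_mul hfm (c := M) (Filter.Eventually.of_forall hfb)
  -- α1 = α0 + τ0
  have hα1 : ∀ u, α1 u = α0 u + τ0 := by
    intro u
    have h := hτdef u
    rw [hτconst u] at h
    linarith
  -- split plus numerator
  have hApsplit : (∫ u, α1 u * hplus u ∂G)
      = (∫ u, (α0 u - μγm) * hplus u ∂G) + (τ0 + μγm) * Ip := by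
    have : (fun u => α1 u * hplus u)
        = fun u => (α0 u - μγm) * hplus u + (τ0 + μγm) * hplus u := by
      funext u; rw [hα1 u]; ring
    rw [this, integral_add int1 (hplus_int.const_mul _), integral_const_mul, hIp]
  have hAmsplit : (∫ u, α0 u * hminus u ∂G)
      = (∫ u, (α0 u - μγm) * hminus u ∂G) + μγm * Im := by
    have : (fun u => α0 u * hminus u)
        = fun u => (α0 u - μγm) * hminus u + μγm * hminus u := by
      funext u; ring
    rw [this, integral_add int2 (hminus_int.const_mul _), integral_const_mul, hIm]
  -- μγm equation ⇒ minus-centered integral vanishes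
  have hμ : μγm * Im = ∫ u, α0 u * hminus u ∂G := by
    rw [hμγm, hAm, hBm]
    exact div_mul_cancel₀ _ hIm0
  have hzero : (∫ u, (α0 u - μγm) * hminus u ∂G) = 0 := by
    have := hAmsplit
    linarith [hμ]
  -- the key representation of τγ - τ0
  set N : ℝ := ∫ u, (α0 u - μγm) * hplus u ∂G with hN
  have hτγ' : τγ - τ0 = N / Ip := by
    rw [hτγ, hAp, hBp, hApsplit]
    field_simp
    ring
  -- N as integral against the difference
  have hNd : N = ∫ u, (α0 u - μγm) * (hplus u - hminus u) ∂G := by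
    have : (fun u => (α0 u - μγm) * (hplus u - hminus u))
        = fun u => (α0 u - μγm) * hplus u - (α0 u - μγm) * hminus u := by
      funext u; ring
    rw [this, integral_sub int1 int2, hzero, hN, sub_zero]
  -- bound |N|
  have habs_int : Integrable (fun u => |hplus u - hminus u|) G := (hplus_int.sub hminus_int).abs
  have hNle : |N| ≤ M * ∫ u, |hplus u - hminus u| ∂G := by
    rw [hNd]
    calc |∫ u, (α0 u - μγm) * (hplus u - hminus u) ∂G|
        ≤ ∫ u, |α0 u - μγm| * |hplus u - hminus u| ∂G := by
          simpa [Real.norm_eq_abs, abs_mul] using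
            norm_integral_le_integral_norm (μ := G) (fun u => (α0 u - μγm) * (hplus u - hminus u))
      _ ≤ ∫ u, M * |hplus u - hminus u| ∂G := by
          refine integral_mono (by simpa [abs_mul] using intd.abs) (habs_int.const_mul M) fun u => ?_
          exact mul_le_mul_of_nonneg_right (hMa u) (abs_nonneg _)
      _ = M * ∫ u, |hplus u - hminus u| ∂G := integral_const_mul _ _
  rw [hτγ', abs_div, abs_of_pos hhppos]
  exact (div_le_div_iff_of_pos_right hhppos).mpr hNle
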